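/- Under Assumption 1, if θ := P(S₊ⁱ = 0) > 0, then E(Sᵗ) ≤ E(Sⁱ), where E(Sᵗ) := Σ_{k=1}^∞ k·π_k ∈ (0, ∞] is the expected typical cluster size and E(Sⁱ) ∈ [1, ∞] is the expected inspected cluster size; this holds without assuming P(S₊ⁱ < ∞) = 1 (if P(S₊ⁱ < ∞) < 1 then E(Sⁱ) = ∞). -/

import Mathlib

open MeasureTheory Filter Set ENNReal

noncomputable section

/-- The cluster `C(ω) = {t : I_t(ω) = 1}` of a binary process. -/
def clusterSet {Ω : Type*} (I : ℤ → Ω → Bool) (ω : Ω) : Set ℤ :=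
  {t : ℤ | I t ω = true}

/-- Inspected cluster size `Sⁱ(ω) = Σ_{t ∈ ℤ} I_t(ω) ∈ ℕ ∪ {∞}`. -/
def SiFn {Ω : Type*} (I : ℤ → Ω → Bool) (ω : Ω) : ℕ∞ :=
  {t : ℤ | I t ω = true}.encard

/-- Forward inspected cluster size `S₊ⁱ(ω) = Σ_{t ≥ 1} I_t(ω) ∈ ℕ₀ ∪ {∞}`. -/
def SplusFn {Ω : Type*} (I : ℤ → Ω → Bool) (ω : Ω) : ℕ∞ :=
  {t : ℤ | 0 < t ∧ I t ω = true}.encard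

/-- Backward inspected cluster size `S₋ⁱ(ω) = Σ_{t ≤ -1} I_t(ω) ∈ ℕ₀ ∪ {∞}`. -/
def SminusFn {Ω : Type*} (I : ℤ → Ω → Bool) (ω : Ω) : ℕ∞ :=
  {t : ℤ | t < 0 ∧ I t ω = true}.encard

section Aux

variable {Ω : Type*} [MeasurableSpace Ω]

/-- finite cylinder event -/
def cylF (I : ℤ → Ω → Bool) (F : Finset ℤ) (ε : ℤ → Bool) : Set Ω :=
  {ω | ∀ t ∈ F, I t ω = ε t}

/-- full configuration event -/
def cylEq (I : ℤ → Ω → Bool) (T : Finset ℤ) : Set Ω :=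
  {ω | ∀ t : ℤ, I t ω = decide (t ∈ T)}

variable {I : ℤ → Ω → Bool}

lemma meas_cylF (hI : ∀ t, Measurable (I t)) (F : Finset ℤ) (ε : ℤ → Bool) :
    MeasurableSet (cylF I F ε) := by
  have : cylF I F ε = ⋂ t ∈ F, (I t) ⁻¹' {ε t} := by
    ext ω; simp [cylF]
  rw [this]
  exact MeasurableSet.biInter F.countable_toSet
    (fun t _ => hI t (measurableSet_singleton _))

lemma meas_cylEq (hI : ∀ t, Measurable (I t)) (T : Finset ℤ) :
    MeasurableSet (cylEq I T) := by
  have : cylEq I T = ⋂ t : ℤ, (I t) ⁻¹' {decide (t ∈ T)} := by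
    ext ω; simp [cylEq]
  rw [this]
  exact MeasurableSet.iInter (fun t => hI t (measurableSet_singleton _))

lemma cylEq_disjoint {T T' : Finset ℤ} (h : T ≠ T') :
    Disjoint (cylEq I T) (cylEq I T') := by
  rw [Set.disjoint_left]
  intro ω h1 h2
  apply h
  ext t
  have e1 := h1 t
  have e2 := h2 t
  rw [e1] at e2
  constructor <;> intro ht
  · have : decide (t ∈ T) = true := by simp [ht]
    rw [this] at e2; exact of_decide_eq_true e2.symm
  · have : decide (t ∈ T') = true := by simp [ht]
    rw [this] at e2; exact of_decide_eq_true e2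

lemma cylEq_mem_iff {T : Finset ℤ} {ω : Ω} :
    ω ∈ cylEq I T ↔ ∀ t : ℤ, (I t ω = true ↔ t ∈ T) := by
  constructor
  · intro h t
    rw [h t]
    simp
  · intro h t
    by_cases ht : t ∈ T
    · simp [ht, (h t).mpr ht]
    · have hf : I t ω ≠ true := fun hh => ht ((h t).mp hh)
      simp [ht, Bool.eq_false_iff.mpr hf]

lemma cylEq_eq_iInter (T : Finset ℤ) :
    cylEq I T = ⋂ F : Finset ℤ, cylF I F (fun t => decide (t ∈ T)) := by
  ext ω
  simp only [Set.mem_iInter, cylEq, cylF, Set.mem_setOf_eq]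
  constructor
  · intro h F t _; exact h t
  · intro h t; exact h {t} t (Finset.mem_singleton_self t)

lemma q_eq_iInf (P : Measure Ω) [IsProbabilityMeasure P] (hI : ∀ t, Measurable (I t))
    (T : Finset ℤ) :
    P (cylEq I T) = ⨅ F : Finset ℤ, P (cylF I F (fun t => decide (t ∈ T))) := by
  rw [cylEq_eq_iInter]
  refine Directed.measure_iInter ?_ ?_ ⟨∅, measure_ne_top P _⟩
  · intro F; exact (meas_cylF hI F _).nullMeasurableSet
  · intro F G
    refine ⟨F ∪ G, ?_, ?_⟩ <;> intro ω hω t ht <;> exact hω t (by simp [ht])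

lemma cylF_anti {F G : Finset ℤ} (h : F ⊆ G) (ε : ℤ → Bool) :
    cylF I G ε ⊆ cylF I F ε := fun ω hω t ht => hω t (h ht)

/-- shifted config event rewrite -/
lemma cylF_shift_congr (F' : Finset ℤ) (T : Finset ℤ) (s : ℤ) :
    cylF I F' (fun u => decide (u + s ∈ T)) =
      cylF I F' (fun u => decide (u ∈ T.image (· - s))) := by
  have key : ∀ u : ℤ, decide (u + s ∈ T) = decide (u ∈ T.image (· - s)) := by
    intro u
    apply decide_eq_decide.mpr
    simp only [Finset.mem_image]
    constructor
    · intro h; exact ⟨u + s, h, by ring⟩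
    · rintro ⟨a, ha, rfl⟩; simpa using ha
  unfold cylF
  simp only [key]

lemma q_le_shift (P : Measure Ω) [IsProbabilityMeasure P] (hI : ∀ t, Measurable (I t))
    (hshift : ∀ (F : Finset ℤ) (ε : ℤ → Bool) (s : ℤ), 0 ∈ F → ε 0 = true →
      s ∈ F → ε s = true →
      P (cylF I F ε) = P (cylF I (F.image (· - s)) (fun u => ε (u + s))))
    (T : Finset ℤ) (h0 : (0:ℤ) ∈ T) (s : ℤ) (hs : s ∈ T) :
    P (cylEq I T) ≤ P (cylEq I (T.image (· - s))) := by
  rw [q_eq_iInf P hI, q_eq_iInf P hI]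
  refine le_iInf fun G => ?_
  set F : Finset ℤ := G.image (· + s) ∪ T with hF
  have h0F : (0:ℤ) ∈ F := by simp [hF, h0]
  have hsF : s ∈ F := by simp [hF, hs]
  have step1 : P (cylF I F (fun t => decide (t ∈ T))) =
      P (cylF I (F.image (· - s)) (fun u => decide (u + s ∈ T))) :=
    hshift F (fun t => decide (t ∈ T)) s h0F (by simp [h0]) hsF (by simp [hs])
  have step2 : cylF I (F.image (· - s)) (fun u => decide (u + s ∈ T)) =
      cylF I (F.image (· - s)) (fun u => decide (u ∈ T.image (· - s))) :=
    cylF_shift_congr _ T s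
  have hGsub : G ⊆ F.image (· - s) := by
    intro g hg
    refine Finset.mem_image.mpr ⟨g + s, ?_, by ring⟩
    simp only [hF, Finset.mem_union, Finset.mem_image]
    exact Or.inl ⟨g, hg, rfl⟩
  calc (⨅ F' : Finset ℤ, P (cylF I F' (fun t => decide (t ∈ T))))
      ≤ P (cylF I F (fun t => decide (t ∈ T))) := iInf_le _ F
    _ = P (cylF I (F.image (· - s)) (fun u => decide (u ∈ T.image (· - s)))) := by
        rw [step1, step2]
    _ ≤ P (cylF I G (fun u => decide (u ∈ T.image (· - s)))) :=
        measure_mono (cylF_anti hGsub _)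

lemma q_shift (P : Measure Ω) [IsProbabilityMeasure P] (hI : ∀ t, Measurable (I t))
    (hshift : ∀ (F : Finset ℤ) (ε : ℤ → Bool) (s : ℤ), 0 ∈ F → ε 0 = true →
      s ∈ F → ε s = true →
      P (cylF I F ε) = P (cylF I (F.image (· - s)) (fun u => ε (u + s))))
    (T : Finset ℤ) (h0 : (0:ℤ) ∈ T) (s : ℤ) (hs : s ∈ T) :
    P (cylEq I T) = P (cylEq I (T.image (· - s))) := by
  refine le_antisymm (q_le_shift P hI hshift T h0 s hs) ?_
  have h0' : (0:ℤ) ∈ T.image (· - s) := Finset.mem_image.mpr ⟨s, hs, sub_self s⟩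
  have hs' : -s ∈ T.image (· - s) := Finset.mem_image.mpr ⟨0, h0, by ring⟩
  have := q_le_shift P hI hshift (T.image (· - s)) h0' (-s) hs'
  have himg : (T.image (· - s)).image (· - (-s)) = T := by
    rw [Finset.image_image]
    have : ((· - (-s)) ∘ (· - s)) = (id : ℤ → ℤ) := by
      funext x; simp
    rw [this, Finset.image_id]
  rwa [himg] at this

/-- min' of a shifted finset -/
lemma min'_image_sub (T : Finset ℤ) (hT : T.Nonempty) (s : ℤ) :
    (T.image (· - s)).min' (hT.image _) = T.min' hT - s := by
  apply le_antisymm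
  · exact Finset.min'_le _ _ (Finset.mem_image.mpr ⟨T.min' hT, T.min'_mem hT, rfl⟩)
  · refine Finset.le_min' _ _ _ ?_
    rintro y hy
    rcases Finset.mem_image.mp hy with ⟨a, ha, rfl⟩
    have := T.min'_le a ha
    omega

/-- Palm reindexing map -/
def palmMap (k : ℕ) :
    (Σ T : {T : Finset ℤ // T.card = k ∧ (0:ℤ) ∈ T ∧ ∀ t ∈ T, 0 ≤ t}, {s : ℤ // s ∈ T.1}) →
      {T : Finset ℤ // T.card = k ∧ (0:ℤ) ∈ T} :=
  fun x =>
    ⟨x.1.1.image (· - x.2.1),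
      by rw [Finset.card_image_of_injective _ sub_left_injective]; exact x.1.2.1,
      Finset.mem_image.mpr ⟨x.2.1, x.2.2, sub_self _⟩⟩

lemma image_sub_sub_neg (T : Finset ℤ) (s : ℤ) :
    (T.image (· - s)).image (· - (-s)) = T := by
  rw [Finset.image_image]
  have : ((· - -s) ∘ (· - s)) = (id : ℤ → ℤ) := by funext x; simp
  rw [this, Finset.image_id]

lemma palmMap_bijective (k : ℕ) : Function.Bijective (palmMap k) := by
  constructor
  · rintro ⟨⟨T, hcard, h0, hpos⟩, ⟨s, hs⟩⟩ ⟨⟨T', hcard', h0', hpos'⟩, ⟨s', hs'⟩⟩ heq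
    have hval : T.image (· - s) = T'.image (· - s') := congrArg Subtype.val heq
    have hne : T.Nonempty := ⟨0, h0⟩
    have hne' : T'.Nonempty := ⟨0, h0'⟩
    have hmin : T.min' hne = 0 :=
      le_antisymm (Finset.min'_le _ _ h0) (Finset.le_min' _ _ _ (fun y hy => hpos y hy))
    have hmin' : T'.min' hne' = 0 :=
      le_antisymm (Finset.min'_le _ _ h0') (Finset.le_min' _ _ _ (fun y hy => hpos' y hy))
    have hmins : T.min' hne - s = T'.min' hne' - s' := by
      have e1 := min'_image_sub T hne s
      have e2 := min'_image_sub T' hne' s'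
      rw [← e1, ← e2]
      congr 1
    have hss : s = s' := by omega
    subst hss
    have hTT : T = T' := by
      have := congrArg (fun (U : Finset ℤ) => U.image (· - (-s))) hval
      simpa only [image_sub_sub_neg] using this
    subst hTT
    rfl
  · rintro ⟨T, hcard, h0⟩
    have hne : T.Nonempty := ⟨0, h0⟩
    refine ⟨⟨⟨T.image (· - T.min' hne),
      by rw [Finset.card_image_of_injective _ sub_left_injective]; exact hcard,
      Finset.mem_image.mpr ⟨T.min' hne, T.min'_mem hne, sub_self _⟩,
      by rintro t ht
         rcases Finset.mem_image.mp ht with ⟨a, ha, rfl⟩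
         have := T.min'_le a ha; omega⟩,
      ⟨-T.min' hne, Finset.mem_image.mpr ⟨0, h0, by ring⟩⟩⟩, ?_⟩
    apply Subtype.ext
    show (T.image (· - T.min' hne)).image (· - -T.min' hne) = T
    exact image_sub_sub_neg T (T.min' hne)

lemma palm_tsum (P : Measure Ω) [IsProbabilityMeasure P] (hI : ∀ t, Measurable (I t))
    (hshift : ∀ (F : Finset ℤ) (ε : ℤ → Bool) (s : ℤ), 0 ∈ F → ε 0 = true →
      s ∈ F → ε s = true →
      P (cylF I F ε) = P (cylF I (F.image (· - s)) (fun u => ε (u + s))))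
    (k : ℕ) :
    ∑' T : {T : Finset ℤ // T.card = k ∧ (0:ℤ) ∈ T}, P (cylEq I T.1)
      = (k : ℝ≥0∞) *
        ∑' T : {T : Finset ℤ // T.card = k ∧ (0:ℤ) ∈ T ∧ ∀ t ∈ T, 0 ≤ t}, P (cylEq I T.1) := by
  rw [← (Equiv.ofBijective _ (palmMap_bijective k)).tsum_eq
    (fun T : {T : Finset ℤ // T.card = k ∧ (0:ℤ) ∈ T} => P (cylEq I T.1))]
  rw [ENNReal.tsum_sigma']
  have step : ∀ T : {T : Finset ℤ // T.card = k ∧ (0:ℤ) ∈ T ∧ ∀ t ∈ T, 0 ≤ t},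
      (∑' s : {s : ℤ // s ∈ T.1}, P (cylEq I (T.1.image (· - s.1))))
        = (k : ℝ≥0∞) * P (cylEq I T.1) := by
    intro T
    have h1 : ∀ s : {s : ℤ // s ∈ T.1},
        P (cylEq I (T.1.image (· - s.1))) = P (cylEq I T.1) :=
      fun s => (q_shift P hI hshift T.1 T.2.2.1 s.1 s.2).symm
    calc (∑' s : {s : ℤ // s ∈ T.1}, P (cylEq I (T.1.image (· - s.1))))
        = ∑' _s : {s : ℤ // s ∈ T.1}, P (cylEq I T.1) := tsum_congr h1
      _ = ∑ _s ∈ T.1, P (cylEq I T.1) := T.1.tsum_subtype (fun _ => P (cylEq I T.1))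
      _ = T.1.card • P (cylEq I T.1) := Finset.sum_const _
      _ = (k : ℝ≥0∞) * P (cylEq I T.1) := by rw [T.2.1, nsmul_eq_mul]
  calc (∑' (T : {T : Finset ℤ // T.card = k ∧ (0:ℤ) ∈ T ∧ ∀ t ∈ T, 0 ≤ t})
          (s : {s : ℤ // s ∈ T.1}),
          P (cylEq I ((Equiv.ofBijective _ (palmMap_bijective k)) ⟨T, s⟩).1))
      = ∑' T : {T : Finset ℤ // T.card = k ∧ (0:ℤ) ∈ T ∧ ∀ t ∈ T, 0 ≤ t},
          (k : ℝ≥0∞) * P (cylEq I T.1) := tsum_congr (fun T => step T)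
    _ = _ := ENNReal.tsum_mul_left

/-- Cauchy-Schwarz for the relevant weighted sums in `ℝ≥0∞`. -/
lemma cs_ineq (f : ℕ → ℝ≥0∞) :
    (∑' k : ℕ, (k : ℝ≥0∞) * f k) * (∑' k : ℕ, (k : ℝ≥0∞) * f k)
      ≤ (∑' k : ℕ, f k) * (∑' k : ℕ, (k : ℝ≥0∞) * ((k : ℝ≥0∞) * f k)) := by
  have expand : ∀ u v : ℕ → ℝ≥0∞,
      (∑' k, u k) * (∑' m, v m) = ∑' k, ∑' m, u k * v m := by
    intro u v
    rw [← ENNReal.tsum_mul_right]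
    exact tsum_congr fun k => (ENNReal.tsum_mul_left).symm
  have h2 : (2 : ℝ≥0∞) ≠ 0 := by norm_num
  have h2' : (2 : ℝ≥0∞) ≠ ⊤ := by norm_num
  rw [← ENNReal.mul_le_mul_iff_right h2 h2']
  have term : ∀ k m : ℕ,
      2 * (((k : ℝ≥0∞) * f k) * ((m : ℝ≥0∞) * f m))
        ≤ f k * ((m : ℝ≥0∞) * ((m : ℝ≥0∞) * f m))
          + ((k : ℝ≥0∞) * ((k : ℝ≥0∞) * f k)) * f m := by
    intro k m
    have hnat : 2 * k * m ≤ m * m + k * k := by zify; nlinarith [sq_nonneg ((k:ℤ) - m)]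
    have hcast : (2 : ℝ≥0∞) * k * m ≤ (m : ℝ≥0∞) * m + (k : ℝ≥0∞) * k := by
      have := Nat.cast_le (α := ℝ≥0∞) |>.mpr hnat
      push_cast at this
      convert this using 1 <;> ring
    calc 2 * (((k : ℝ≥0∞) * f k) * ((m : ℝ≥0∞) * f m))
        = ((2 : ℝ≥0∞) * k * m) * (f k * f m) := by ring
      _ ≤ ((m : ℝ≥0∞) * m + (k : ℝ≥0∞) * k) * (f k * f m) :=
          mul_le_mul_left hcast _
      _ = f k * ((m : ℝ≥0∞) * ((m : ℝ≥0∞) * f m))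
          + ((k : ℝ≥0∞) * ((k : ℝ≥0∞) * f k)) * f m := by ring
  calc 2 * ((∑' k : ℕ, (k : ℝ≥0∞) * f k) * (∑' k : ℕ, (k : ℝ≥0∞) * f k))
      = 2 * ∑' k : ℕ, ∑' m : ℕ, ((k : ℝ≥0∞) * f k) * ((m : ℝ≥0∞) * f m) := by
        rw [expand]
    _ = ∑' k : ℕ, ∑' m : ℕ, 2 * (((k : ℝ≥0∞) * f k) * ((m : ℝ≥0∞) * f m)) := by
        rw [← ENNReal.tsum_mul_left]
        exact tsum_congr fun k => (ENNReal.tsum_mul_left).symm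
    _ ≤ ∑' k : ℕ, ∑' m : ℕ,
          (f k * ((m : ℝ≥0∞) * ((m : ℝ≥0∞) * f m))
            + ((k : ℝ≥0∞) * ((k : ℝ≥0∞) * f k)) * f m) :=
        ENNReal.tsum_le_tsum fun k => ENNReal.tsum_le_tsum fun m => term k m
    _ = (∑' k : ℕ, ∑' m : ℕ, f k * ((m : ℝ≥0∞) * ((m : ℝ≥0∞) * f m)))
        + ∑' k : ℕ, ∑' m : ℕ, ((k : ℝ≥0∞) * ((k : ℝ≥0∞) * f k)) * f m := by
        rw [← ENNReal.tsum_add]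
        exact tsum_congr fun k => ENNReal.tsum_add
    _ = (∑' k : ℕ, f k) * (∑' k : ℕ, (k : ℝ≥0∞) * ((k : ℝ≥0∞) * f k))
        + (∑' k : ℕ, (k : ℝ≥0∞) * ((k : ℝ≥0∞) * f k)) * (∑' k : ℕ, f k) := by
        rw [← expand, ← expand]
    _ = 2 * ((∑' k : ℕ, f k) * (∑' k : ℕ, (k : ℝ≥0∞) * ((k : ℝ≥0∞) * f k))) := by
        ring

lemma q_zero (P : Measure Ω) [IsProbabilityMeasure P] (hI : ∀ t, Measurable (I t))
    (hP0 : P {ω | I 0 ω = true} = 1) (T : Finset ℤ) (h0 : (0:ℤ) ∉ T) :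
    P (cylEq I T) = 0 := by
  have hsub : cylEq I T ⊆ {ω | I 0 ω = true}ᶜ := by
    intro ω hω
    simp only [Set.mem_compl_iff, Set.mem_setOf_eq]
    intro htrue
    exact h0 ((cylEq_mem_iff.mp hω 0).mp htrue)
  have hz : P ({ω | I 0 ω = true}ᶜ) = 0 := by
    have hmeas : MeasurableSet {ω | I 0 ω = true} := hI 0 (measurableSet_singleton true)
    rw [prob_compl_eq_one_sub hmeas, hP0, tsub_self]
  exact measure_mono_null hsub hz

lemma setA_eq (k : ℕ) :
    {ω | SiFn I ω = ((k : ℕ) : ℕ∞)}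
      = ⋃ T : {T : Finset ℤ // T.card = k}, cylEq I T.1 := by
  ext ω
  simp only [Set.mem_setOf_eq, Set.mem_iUnion]
  constructor
  · intro h
    have hfin : {t : ℤ | I t ω = true}.Finite := Set.finite_of_encard_eq_coe h
    have hcard : (hfin.toFinset.card : ℕ∞) = (k : ℕ∞) := by
      have h1 : ((hfin.toFinset : Set ℤ)).encard = (hfin.toFinset.card : ℕ∞) :=
        Set.encard_coe_eq_coe_finsetCard _
      rw [Set.Finite.coe_toFinset] at h1
      rw [← h1]; exact h
    refine ⟨⟨hfin.toFinset, Nat.cast_inj.mp hcard⟩, cylEq_mem_iff.mpr (fun t => ?_)⟩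
    exact ⟨fun h' => hfin.mem_toFinset.mpr h', fun h' => hfin.mem_toFinset.mp h'⟩
  · rintro ⟨⟨T, hT⟩, hω⟩
    have hset : {t : ℤ | I t ω = true} = (T : Set ℤ) := by
      ext t
      simp only [Set.mem_setOf_eq, Finset.coe_sort_coe, Finset.mem_coe]
      exact cylEq_mem_iff.mp hω t
    show SiFn I ω = (k : ℕ∞)
    rw [SiFn, hset, Set.encard_coe_eq_coe_finsetCard, hT]

lemma setB_mem_iff {ω : Ω} :
    ω ∈ {ω | SminusFn I ω = 0} ↔ ∀ t : ℤ, t < 0 → I t ω = false := by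
  simp only [Set.mem_setOf_eq, SminusFn, Set.encard_eq_zero, Set.eq_empty_iff_forall_notMem]
  constructor
  · intro h t ht
    have := h t
    simp only [Set.mem_setOf_eq, not_and] at this
    have := this ht
    exact Bool.eq_false_iff.mpr this
  · intro h t
    simp only [Set.mem_setOf_eq, not_and]
    intro ht
    rw [h t ht]; simp

lemma setAB_eq (k : ℕ) :
    {ω | SiFn I ω = ((k : ℕ) : ℕ∞)} ∩ {ω | SminusFn I ω = 0}
      = ⋃ T : {T : Finset ℤ // T.card = k ∧ ∀ t ∈ T, 0 ≤ t}, cylEq I T.1 := by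
  ext ω
  simp only [Set.mem_inter_iff, Set.mem_iUnion]
  constructor
  · rintro ⟨hA, hB⟩
    rw [setA_eq k] at hA
    rcases Set.mem_iUnion.mp hA with ⟨⟨T, hT⟩, hω⟩
    have hpos : ∀ t ∈ T, (0:ℤ) ≤ t := by
      intro t ht
      by_contra hneg
      push_neg at hneg
      have hfalse : I t ω = false := setB_mem_iff.mp hB t hneg
      have htrue : I t ω = true := (cylEq_mem_iff.mp hω t).mpr ht
      rw [htrue] at hfalse; exact absurd hfalse (by simp)
    exact ⟨⟨T, hT, hpos⟩, hω⟩
  · rintro ⟨⟨T, hT, hpos⟩, hω⟩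
    constructor
    · rw [setA_eq k]
      exact Set.mem_iUnion.mpr ⟨⟨T, hT⟩, hω⟩
    · refine setB_mem_iff.mpr (fun t ht => ?_)
      have hnot : t ∉ T := fun hmem => absurd (hpos t hmem) (not_le.mpr ht)
      have := hω t
      simpa [hnot] using this

lemma key_ineq (P : Measure Ω) [IsProbabilityMeasure P] (hI : ∀ t, Measurable (I t))
    (hP0 : P {ω | I 0 ω = true} = 1)
    (hshift : ∀ (F : Finset ℤ) (ε : ℤ → Bool) (s : ℤ), 0 ∈ F → ε 0 = true →
      s ∈ F → ε s = true →
      P (cylF I F ε) = P (cylF I (F.image (· - s)) (fun u => ε (u + s)))) :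
    (∑' k : ℕ, (k : ℝ≥0∞) * (P ({ω | SiFn I ω = ((k : ℕ) : ℕ∞)} ∩ {ω | SminusFn I ω = 0})
        / P {ω | SminusFn I ω = 0})) ≤ ∫⁻ ω, (SiFn I ω : ℝ≥0∞) ∂P := by
  set A : ℕ → Set Ω := fun k => {ω | SiFn I ω = ((k : ℕ) : ℕ∞)} with hA
  set B : Set Ω := {ω | SminusFn I ω = 0} with hBdef
  by_cases hθm : P B = 0
  · have hz : ∀ k : ℕ, P (A k ∩ B) = 0 :=
      fun k => measure_mono_null Set.inter_subset_right hθm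
    have : ∀ k : ℕ, (k : ℝ≥0∞) * (P (A k ∩ B) / P B) = 0 := by
      intro k; rw [hz k, ENNReal.zero_div, mul_zero]
    refine (le_of_eq ((tsum_congr this).trans tsum_zero)).trans ?_
    exact zero_le
  by_cases hJ : ∫⁻ ω, (SiFn I ω : ℝ≥0∞) ∂P = ⊤
  · rw [hJ]; exact le_top
  -- measurability
  have hAmeas : ∀ k : ℕ, MeasurableSet (A k) := by
    intro k
    rw [hA]
    simp only
    rw [setA_eq k]
    exact MeasurableSet.iUnion (fun T => meas_cylEq hI T.1)
  have hBmeas : MeasurableSet B := by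
    have : B = ⋂ (t : ℤ), ⋂ (_ : t < 0), (I t) ⁻¹' {false} := by
      ext ω
      simp only [Set.mem_iInter, Set.mem_preimage, Set.mem_singleton_iff]
      exact setB_mem_iff
    rw [this]
    exact MeasurableSet.iInter fun t => MeasurableSet.iInter fun _ =>
      hI t (measurableSet_singleton false)
  have hAdis : Pairwise (Function.onFun Disjoint A) := by
    intro i j hij
    rw [Function.onFun, Set.disjoint_left]
    intro ω hi hj
    exact hij (Nat.cast_inj.mp ((Set.mem_setOf_eq ▸ hi).symm.trans hj))
  have hUnion : (⋃ k : ℕ, A k) = {ω | SiFn I ω ≠ ⊤} := by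
    ext ω
    simp only [Set.mem_iUnion, Set.mem_setOf_eq]
    constructor
    · rintro ⟨k, hk⟩
      rw [hk]; exact ENat.coe_ne_top k
    · intro h
      obtain ⟨n, hn⟩ := WithTop.ne_top_iff_exists.mp h
      exact ⟨n, hn.symm⟩
  have htop_meas : MeasurableSet {ω | SiFn I ω = ⊤} := by
    have : {ω | SiFn I ω = ⊤} = (⋃ k : ℕ, A k)ᶜ := by
      rw [hUnion]; ext ω; simp
    rw [this]
    exact (MeasurableSet.iUnion hAmeas).compl
  -- P(Si = ⊤) = 0
  have htop0 : P {ω | SiFn I ω = ⊤} = 0 := by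
    by_contra h
    have hle : (fun ω => Set.indicator {ω | SiFn I ω = ⊤} (fun _ => (⊤ : ℝ≥0∞)) ω)
        ≤ fun ω => ((SiFn I ω : ℕ∞) : ℝ≥0∞) := by
      intro ω
      dsimp only
      by_cases hω : ω ∈ {ω | SiFn I ω = ⊤}
      · rw [Set.indicator_of_mem hω]
        have : SiFn I ω = ⊤ := hω
        rw [this]
        simp
      · rw [Set.indicator_of_notMem hω]; exact zero_le
    have hmono := lintegral_mono (μ := P) hle
    rw [lintegral_indicator_const htop_meas, ENNReal.top_mul h] at hmono
    exact hJ (top_le_iff.mp hmono)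
  -- measure of A k via cylinder sums
  have hbsum : ∀ k : ℕ, P (A k) = ∑' T : {T : Finset ℤ // T.card = k}, P (cylEq I T.1) := by
    intro k
    rw [hA]
    simp only
    rw [setA_eq k]
    exact measure_iUnion
      (fun i j hij => cylEq_disjoint (fun hh => hij (Subtype.ext hh)))
      (fun T => meas_cylEq hI T.1)
  have hasum : ∀ k : ℕ, P (A k ∩ B)
      = ∑' T : {T : Finset ℤ // T.card = k ∧ ∀ t ∈ T, 0 ≤ t}, P (cylEq I T.1) := by
    intro k
    rw [hA, hBdef]
    simp only
    rw [setAB_eq k]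
    exact measure_iUnion
      (fun i j hij => cylEq_disjoint (fun hh => hij (Subtype.ext hh)))
      (fun T => meas_cylEq hI T.1)
  -- restrict sums to configurations containing 0
  have hbsum' : ∀ k : ℕ, P (A k)
      = ∑' T : {T : Finset ℤ // T.card = k ∧ (0:ℤ) ∈ T}, P (cylEq I T.1) := by
    intro k
    rw [hbsum k]
    symm
    refine Function.Injective.tsum_eq (g := fun T : {T : Finset ℤ // T.card = k ∧ (0:ℤ) ∈ T} =>
      (⟨T.1, T.2.1⟩ : {T : Finset ℤ // T.card = k}))
      (f := fun T : {T : Finset ℤ // T.card = k} => P (cylEq I T.1)) ?_ ?_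
    · intro x y hxy
      apply Subtype.ext
      have h' := congrArg Subtype.val hxy
      simpa using h' 
    · intro T hT
      by_cases h0 : (0:ℤ) ∈ T.1
      · exact ⟨⟨T.1, T.2, h0⟩, rfl⟩
      · exact absurd (q_zero P hI hP0 T.1 h0) hT
  have hasum' : ∀ k : ℕ, P (A k ∩ B)
      = ∑' T : {T : Finset ℤ // T.card = k ∧ (0:ℤ) ∈ T ∧ ∀ t ∈ T, 0 ≤ t},
          P (cylEq I T.1) := by
    intro k
    rw [hasum k]
    symm
    refine Function.Injective.tsum_eq
      (g := fun T : {T : Finset ℤ // T.card = k ∧ (0:ℤ) ∈ T ∧ ∀ t ∈ T, 0 ≤ t} =>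
        (⟨T.1, T.2.1, T.2.2.2⟩ : {T : Finset ℤ // T.card = k ∧ ∀ t ∈ T, 0 ≤ t}))
      (f := fun T : {T : Finset ℤ // T.card = k ∧ ∀ t ∈ T, 0 ≤ t} => P (cylEq I T.1)) ?_ ?_
    · intro x y hxy
      apply Subtype.ext
      have h' := congrArg Subtype.val hxy
      simpa using h' 
    · intro T hT
      by_cases h0 : (0:ℤ) ∈ T.1
      · exact ⟨⟨T.1, T.2.1, h0, T.2.2⟩, rfl⟩
      · exact absurd (q_zero P hI hP0 T.1 h0) hT
  -- Palm identity
  have hba : ∀ k : ℕ, P (A k) = (k : ℝ≥0∞) * P (A k ∩ B) := by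
    intro k
    rw [hbsum' k, hasum' k]
    exact palm_tsum P hI hshift k
  -- total mass one
  have hsumb : ∑' k : ℕ, P (A k) = 1 := by
    rw [← measure_iUnion hAdis hAmeas, hUnion]
    have : {ω | SiFn I ω ≠ ⊤} = {ω | SiFn I ω = ⊤}ᶜ := rfl
    rw [this, prob_compl_eq_one_sub htop_meas, htop0, tsub_zero]
  -- lower bound for the integral
  have hintb : ∑' k : ℕ, (k : ℝ≥0∞) * P (A k) ≤ ∫⁻ ω, (SiFn I ω : ℝ≥0∞) ∂P := by
    have hgle : ∀ ω, (∑' k : ℕ, (A k).indicator (fun _ => (k : ℝ≥0∞)) ω)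
        ≤ ((SiFn I ω : ℕ∞) : ℝ≥0∞) := by
      intro ω
      by_cases hω : SiFn I ω = ⊤
      · rw [hω]; simp
      · obtain ⟨n, hn⟩ := WithTop.ne_top_iff_exists.mp hω
        have hmem : ω ∈ A n := by rw [hA]; exact hn.symm
        have hg : (∑' k : ℕ, (A k).indicator (fun _ => (k : ℝ≥0∞)) ω) = (n : ℝ≥0∞) := by
          rw [tsum_eq_single n]
          · rw [Set.indicator_of_mem hmem]
          · intro m hm
            apply Set.indicator_of_notMem
            intro hmem'
            have h1 : SiFn I ω = ((m : ℕ) : ℕ∞) := hmem'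
            rw [← hn] at h1
            exact hm (Nat.cast_inj.mp h1.symm)
        rw [hg, ← hn]
        exact le_of_eq (ENat.toENNReal_coe n).symm
    calc ∑' k : ℕ, (k : ℝ≥0∞) * P (A k)
        = ∫⁻ ω, (∑' k : ℕ, (A k).indicator (fun _ => (k : ℝ≥0∞)) ω) ∂P := by
          rw [lintegral_tsum (fun k => (measurable_const.indicator (hAmeas k)).aemeasurable)]
          exact tsum_congr fun k => (lintegral_indicator_const (hAmeas k) _).symm
      _ ≤ ∫⁻ ω, (SiFn I ω : ℝ≥0∞) ∂P := lintegral_mono hgle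
  -- arithmetic
  have S1 : ∑' k : ℕ, (k : ℝ≥0∞) * P (A k ∩ B) = 1 := by
    rw [← hsumb]
    exact tsum_congr fun k => (hba k).symm
  have Sa : ∑' k : ℕ, P (A k ∩ B) ≤ P B := by
    have hd : Pairwise (Function.onFun Disjoint fun k : ℕ => A k ∩ B) := fun i j hij =>
      ((hAdis hij).mono Set.inter_subset_left Set.inter_subset_left)
    rw [← measure_iUnion hd (fun k => (hAmeas k).inter hBmeas)]
    exact measure_mono (Set.iUnion_subset fun k => Set.inter_subset_right)
  have S2 : ∑' k : ℕ, (k : ℝ≥0∞) * ((k : ℝ≥0∞) * P (A k ∩ B))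
      ≤ ∫⁻ ω, (SiFn I ω : ℝ≥0∞) ∂P := by
    calc ∑' k : ℕ, (k : ℝ≥0∞) * ((k : ℝ≥0∞) * P (A k ∩ B))
        = ∑' k : ℕ, (k : ℝ≥0∞) * P (A k) := tsum_congr fun k => by rw [hba k]
      _ ≤ _ := hintb
  have hkey : (1 : ℝ≥0∞) ≤ P B * ∫⁻ ω, (SiFn I ω : ℝ≥0∞) ∂P := by
    calc (1 : ℝ≥0∞) = (∑' k : ℕ, (k : ℝ≥0∞) * P (A k ∩ B))
          * (∑' k : ℕ, (k : ℝ≥0∞) * P (A k ∩ B)) := by rw [S1, one_mul]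
      _ ≤ (∑' k : ℕ, P (A k ∩ B))
          * (∑' k : ℕ, (k : ℝ≥0∞) * ((k : ℝ≥0∞) * P (A k ∩ B))) := cs_ineq _
      _ ≤ P B * ∫⁻ ω, (SiFn I ω : ℝ≥0∞) ∂P := mul_le_mul' Sa S2
  have hθtop : P B ≠ ⊤ := measure_ne_top P B
  calc ∑' k : ℕ, (k : ℝ≥0∞) * (P (A k ∩ B) / P B)
      = ∑' k : ℕ, ((k : ℝ≥0∞) * P (A k ∩ B)) * (P B)⁻¹ :=
        tsum_congr fun k => by rw [div_eq_mul_inv, mul_assoc]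
    _ = (∑' k : ℕ, (k : ℝ≥0∞) * P (A k ∩ B)) * (P B)⁻¹ := ENNReal.tsum_mul_right
    _ = (P B)⁻¹ := by rw [S1, one_mul]
    _ = (P B)⁻¹ * 1 := (mul_one _).symm
    _ ≤ (P B)⁻¹ * (P B * ∫⁻ ω, (SiFn I ω : ℝ≥0∞) ∂P) := mul_le_mul_right hkey _
    _ = ((P B)⁻¹ * P B) * ∫⁻ ω, (SiFn I ω : ℝ≥0∞) ∂P := (mul_assoc _ _ _).symm
    _ = ∫⁻ ω, (SiFn I ω : ℝ≥0∞) ∂P := by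
        rw [ENNReal.inv_mul_cancel hθm hθtop, one_mul]

end Aux

/-- Final remark of Section 4: under Assumption 1, if `θ = P(S₊ⁱ = 0) > 0`,
then `E(Sᵗ) ≤ E(Sⁱ)`, without assuming `P(S₊ⁱ < ∞) = 1`. -/
theorem typical_mean_le_inspected_mean
    {Ω : Type*} [MeasurableSpace Ω] (P : Measure Ω) [IsProbabilityMeasure P]
    (I : ℤ → Ω → Bool) (hI : ∀ t, Measurable (I t))
    {Ωn : ℕ → Type*} [∀ n, MeasurableSpace (Ωn n)]
    (Pn : ∀ n, Measure (Ωn n)) (hPn : ∀ n, IsProbabilityMeasure (Pn n))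
    (In : ∀ n, ℤ → Ωn n → Bool) (hIn : ∀ n t, Measurable (In n t))
    -- `P(I₀ⁿ = 1) > 0` for all `n`
    (hpos : ∀ n, 0 < Pn n {ω | In n 0 ω = true})
    -- stationarity of each `(Iₜⁿ)ₜ`
    (hstat : ∀ n (F : Finset ℤ) (ε : ℤ → Bool) (k : ℤ),
      Pn n {ω | ∀ t ∈ F, In n t ω = ε t} = Pn n {ω | ∀ t ∈ F, In n (t + k) ω = ε t})
    -- convergence of the conditional finite-dimensional distributions
    (hconv : ∀ (F : Finset ℤ) (ε : ℤ → Bool),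
      Tendsto (fun n =>
          Pn n ({ω | ∀ t ∈ F, In n t ω = ε t} ∩ {ω | In n 0 ω = true})
            / Pn n {ω | In n 0 ω = true}) atTop
        (nhds (P {ω | ∀ t ∈ F, I t ω = ε t})))

    (hθ : 0 < P {ω | SplusFn I ω = 0}) :
    (∑' k : ℕ, (k : ℝ≥0∞) * (P ({ω | SiFn I ω = ((k : ℕ) : ℕ∞)} ∩ {ω | SminusFn I ω = 0}) / P {ω | SminusFn I ω = 0})) ≤ ∫⁻ ω, (SiFn I ω : ℝ≥0∞) ∂P := by
  -- Step 1: `P(I₀ = 1) = 1`.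
  have hP0 : P {ω | I 0 ω = true} = 1 := by
    have h1 := hconv {0} (fun _ => true)
    have heq : ∀ n, Pn n ({ω | ∀ t ∈ ({0} : Finset ℤ), In n t ω = true}
        ∩ {ω | In n 0 ω = true}) / Pn n {ω | In n 0 ω = true} = 1 := by
      intro n
      have hset : {ω | ∀ t ∈ ({0} : Finset ℤ), In n t ω = true}
          = {ω | In n 0 ω = true} := by
        ext ω; simp
      rw [hset, Set.inter_self,
        ENNReal.div_self (hpos n).ne' (measure_ne_top _ _)]
    have h2 : Tendsto (fun _ : ℕ => (1 : ℝ≥0∞)) atTop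
        (nhds (P {ω | ∀ t ∈ ({0} : Finset ℤ), I t ω = true})) := by
      refine (tendsto_congr ?_).mp h1
      exact heq
    have h3 : P {ω | ∀ t ∈ ({0} : Finset ℤ), I t ω = true} = 1 :=
      tendsto_nhds_unique h2 tendsto_const_nhds
    have hset : {ω | ∀ t ∈ ({0} : Finset ℤ), I t ω = true}
        = {ω | I 0 ω = true} := by
      ext ω; simp
    rwa [hset] at h3
  -- Step 2: cylinder shift invariance of `P`.
  have hshift : ∀ (F : Finset ℤ) (ε : ℤ → Bool) (s : ℤ), 0 ∈ F → ε 0 = true →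
      s ∈ F → ε s = true →
      P (cylF I F ε) = P (cylF I (F.image (· - s)) (fun u => ε (u + s))) := by
    intro F ε s h0F hε0 hsF hεs
    have hA := hconv F ε
    have hB := hconv (F.image (· - s)) (fun u => ε (u + s))
    have claim : ∀ n,
        Pn n ({ω | ∀ t ∈ F, In n t ω = ε t} ∩ {ω | In n 0 ω = true})
          / Pn n {ω | In n 0 ω = true}
        = Pn n ({ω | ∀ t ∈ F.image (· - s), In n t ω = ε (t + s)}
            ∩ {ω | In n 0 ω = true}) / Pn n {ω | In n 0 ω = true} := by
      intro n
      have sub1 : {ω | ∀ t ∈ F, In n t ω = ε t} ⊆ {ω | In n 0 ω = true} := by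
        intro ω hω
        have := hω 0 h0F
        rw [Set.mem_setOf_eq, this, hε0]
      have sub2 : {ω | ∀ t ∈ F.image (· - s), In n t ω = ε (t + s)}
          ⊆ {ω | In n 0 ω = true} := by
        intro ω hω
        have h0' : (0 : ℤ) ∈ F.image (· - s) := Finset.mem_image.mpr ⟨s, hsF, sub_self s⟩
        have := hω 0 h0'
        rw [Set.mem_setOf_eq, this, zero_add, hεs]
      have middle : Pn n {ω | ∀ t ∈ F, In n t ω = ε t}
          = Pn n {ω | ∀ t ∈ F.image (· - s), In n t ω = ε (t + s)} := by
        rw [hstat n F ε (-s)]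
        congr 1
        ext ω
        simp only [Set.mem_setOf_eq]
        constructor
        · intro h u hu
          rcases Finset.mem_image.mp hu with ⟨t, ht, rfl⟩
          have := h t ht
          rw [sub_add_cancel]
          rw [← sub_eq_add_neg] at this
          exact this
        · intro h t ht
          have := h (t - s) (Finset.mem_image.mpr ⟨t, ht, rfl⟩)
          rw [sub_add_cancel] at this
          rw [← sub_eq_add_neg]
          exact this
      rw [Set.inter_eq_self_of_subset_left sub1,
        Set.inter_eq_self_of_subset_left sub2, middle]
    have hB' : Tendsto (fun n =>
        Pn n ({ω | ∀ t ∈ F, In n t ω = ε t} ∩ {ω | In n 0 ω = true})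
          / Pn n {ω | In n 0 ω = true}) atTop
        (nhds (P {ω | ∀ t ∈ F.image (· - s), I t ω = ε (t + s)})) := by
      refine (tendsto_congr ?_).mpr hB
      exact claim
    exact tendsto_nhds_unique hA hB'
  exact key_ineq P hI hP0 hshift
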